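/- If z is a nonreal complex root of φ_m(z) = (z+1)···(z+m-1) - m!, then its complex conjugate z̄ is also a root, and Re(z) < 1. -/

import Mathlib

open Polynomial

lemma prod_add_two_eq_factorial (n : ℕ) :
    ∏ j ∈ Finset.range n, ((j : ℝ) + 2) = (n + 1).factorial := by
  induction n with
  | zero => simp
  | succ n ih =>
      rw [Finset.prod_range_succ, ih]
      have : (n+1+1).factorial = (n+1).factorial * (n+2) := by
        rw [Nat.factorial_succ]; ring
      rw [this]
      push_cast
      ring

theorem phi_conj_root_and_re_lt_one (m : ℕ) (hm : 2 ≤ m) (z : ℂ) (hz : z.im ≠ 0)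
    (hroot : ((∏ j ∈ Finset.range (m - 1), (X + C ((j : ℂ) + 1))) -
      C ((m.factorial : ℂ))).IsRoot z) :
    ((∏ j ∈ Finset.range (m - 1), (X + C ((j : ℂ) + 1))) -
      C ((m.factorial : ℂ))).IsRoot (starRingEnd ℂ z) ∧ z.re < 1 := by
  have heval : ∀ w : ℂ,
      ((∏ j ∈ Finset.range (m - 1), (X + C ((j : ℂ) + 1))) -
        C ((m.factorial : ℂ))).eval w
      = (∏ j ∈ Finset.range (m - 1), (w + ((j : ℂ) + 1))) - (m.factorial : ℂ) := by
    intro w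
    simp [eval_prod]
  have hz0 : (∏ j ∈ Finset.range (m - 1), (z + ((j : ℂ) + 1))) = (m.factorial : ℂ) := by
    have := hroot
    rw [IsRoot, heval, sub_eq_zero] at this
    exact this
  constructor
  · rw [IsRoot, heval, sub_eq_zero]
    calc ∏ j ∈ Finset.range (m - 1), ((starRingEnd ℂ) z + ((j : ℂ) + 1))
        = ∏ j ∈ Finset.range (m - 1), (starRingEnd ℂ) (z + ((j : ℂ) + 1)) := by
          apply Finset.prod_congr rfl
          intro j _
          simp
      _ = (starRingEnd ℂ) (∏ j ∈ Finset.range (m - 1), (z + ((j : ℂ) + 1))) := by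
          rw [map_prod]
      _ = (m.factorial : ℂ) := by rw [hz0]; simp
  · by_contra h
    push_neg at h
    have hlt : ∀ j ∈ Finset.range (m - 1),
        ((j : ℝ) + 2) < ‖z + ((j : ℂ) + 1)‖ := by
      intro j _
      have habs : (‖z + ((j : ℂ) + 1)‖)^2
          = (z.re + ((j : ℝ) + 1))^2 + z.im^2 := by
        rw [Complex.sq_norm, Complex.normSq_apply]
        simp
        ring
      have h1 : ((j : ℝ) + 2)^2 < (‖z + ((j : ℂ) + 1)‖)^2 := by
        rw [habs]
        have h2 : ((j : ℝ) + 2) ≤ z.re + ((j : ℝ) + 1) := by linarith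
        have h3 : ((j : ℝ) + 2)^2 ≤ (z.re + ((j : ℝ) + 1))^2 := by
          apply pow_le_pow_left₀ (by positivity) h2
        have h4 : 0 < z.im^2 := by positivity
        linarith
      exact lt_of_pow_lt_pow_left₀ 2 (norm_nonneg _) h1
    have hprodlt : ∏ j ∈ Finset.range (m - 1), ((j : ℝ) + 2)
        < ∏ j ∈ Finset.range (m - 1), ‖z + ((j : ℂ) + 1)‖ := by
      apply Finset.prod_lt_prod_of_nonempty
      · intro j _; positivity
      · exact hlt
      · apply Finset.nonempty_range_iff.mpr
        omega
    have hfac : ∏ j ∈ Finset.range (m - 1), ((j : ℝ) + 2) = (m.factorial : ℝ) := by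
      rw [prod_add_two_eq_factorial]
      congr 2
      omega
    have habsprod : ∏ j ∈ Finset.range (m - 1), ‖z + ((j : ℂ) + 1)‖
        = (m.factorial : ℝ) := by
      rw [← norm_prod, hz0]
      simp
    rw [hfac, habsprod] at hprodlt
    exact lt_irrefl _ hprodlt
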